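/- Let n ≥ 3 be odd, ω_{2n} = e^{2πi/(2n)}, and let G' ⊆ U(2) be the matrix group generated by C = diag(ω_{2n}, ω_{2n}^{-1}) and B = [[0,1],[1,0]] (G' is isomorphic to the dihedral group of order 4n). Then G' is not entangling: every N ∈ U(4) with N (G'⊗G') N† = G'⊗G' satisfies N = A⊗B' or N = SWAP·(A⊗B') for some A, B' ∈ U(2). Consequently, for odd n the matrix group generated by diag(ω_n, ω_n^{-1}) and B has no entangling projective normaliser of its tensor square. -/

import Mathlib

open Matrix Kronecker

/-- The tensor (Kronecker) square of a set of matrices. -/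
def tensorSet (S : Set (Matrix (Fin 2) (Fin 2) ℂ)) :
    Set (Matrix (Fin 2 × Fin 2) (Fin 2 × Fin 2) ℂ) :=
  {x | ∃ a ∈ S, ∃ b ∈ S, x = a ⊗ₖ b}

/-- The SWAP operation on ℂ² ⊗ ℂ², as a matrix. -/
def swapMat : Matrix (Fin 2 × Fin 2) (Fin 2 × Fin 2) ℂ :=
  fun p q => if p.1 = q.2 ∧ p.2 = q.1 then 1 else 0

/-- A two-qubit unitary `V` is entangling if it is neither of the form `A ⊗ B`
nor `SWAP · (A ⊗ B)` for unitaries `A, B`. -/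
def Entangling (V : Matrix (Fin 2 × Fin 2) (Fin 2 × Fin 2) ℂ) : Prop :=
  ∀ A B : Matrix (Fin 2) (Fin 2) ℂ,
    A ∈ Matrix.unitaryGroup (Fin 2) ℂ → B ∈ Matrix.unitaryGroup (Fin 2) ℂ →
      V ≠ A ⊗ₖ B ∧ V ≠ swapMat * (A ⊗ₖ B)

/-- `N` is a projective normaliser of the set of matrices `S`. -/
def ProjNorm {m : Type*} [Fintype m] (N : Matrix m m ℂ) (S : Set (Matrix m m ℂ)) : Prop :=
  ∀ g ∈ S, ∃ g' ∈ S, ∃ c : ℂ, ‖c‖ = 1 ∧ N * g * Nᴴ = c • g'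


namespace Stmt15

noncomputable def Dm (z : ℂ) : Matrix (Fin 2) (Fin 2) ℂ := !![z, 0; 0, z⁻¹]
noncomputable def Am (z : ℂ) : Matrix (Fin 2) (Fin 2) ℂ := !![0, z⁻¹; z, 0]

lemma Dm_mul_Dm (z w : ℂ) : Dm z * Dm w = Dm (z * w) := by
  simp [Dm, Matrix.mul_fin_two, mul_inv, mul_comm]

lemma Dm_mul_Am (z w : ℂ) : Dm z * Am w = Am (z⁻¹ * w) := by
  simp [Dm, Am, Matrix.mul_fin_two, mul_inv, inv_inv, mul_comm]

lemma Am_mul_Dm (z w : ℂ) : Am z * Dm w = Am (z * w) := by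
  simp [Dm, Am, Matrix.mul_fin_two, mul_inv, mul_comm]

lemma Am_mul_Am (z w : ℂ) : Am z * Am w = Dm (z⁻¹ * w) := by
  simp [Dm, Am, Matrix.mul_fin_two, mul_inv, inv_inv, mul_comm]

lemma Dm_one : Dm 1 = 1 := by
  simp [Dm, Matrix.one_fin_two]

lemma Dm_neg_one : Dm (-1) = -1 := by
  simp [Dm, Matrix.one_fin_two]

lemma Dm_pow (z : ℂ) (k : ℕ) : (Dm z) ^ k = Dm (z ^ k) := by
  induction k with
  | zero => simp [Dm_one]
  | succ k ih => rw [pow_succ, pow_succ, ih, Dm_mul_Dm]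

lemma Dm_neg (z : ℂ) : Dm (-z) = -Dm z := by
  simp [Dm, inv_neg]

lemma classify (m : ℕ) (ζ : ℂ) (hζ : ζ ^ m = 1) {g : Matrix (Fin 2) (Fin 2) ℂ}
    (hg : g ∈ Submonoid.closure {Dm ζ, Am 1}) :
    ∃ z : ℂ, z ^ m = 1 ∧ (g = Dm z ∨ g = Am z) := by
  induction hg using Submonoid.closure_induction with
  | mem x hx =>
    rcases hx with h | h
    · exact ⟨ζ, hζ, Or.inl h⟩
    · exact ⟨1, one_pow m, Or.inr h⟩
  | one => exact ⟨1, one_pow m, Or.inl Dm_one.symm⟩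
  | mul x y hx hy ihx ihy =>
    obtain ⟨z, hz, hzc⟩ := ihx
    obtain ⟨w, hw, hwc⟩ := ihy
    rcases hzc with rfl | rfl <;> rcases hwc with rfl | rfl
    · exact ⟨z * w, by rw [mul_pow, hz, hw, one_mul], Or.inl (Dm_mul_Dm z w)⟩
    · exact ⟨z⁻¹ * w, by rw [mul_pow, inv_pow, hz, hw, inv_one, one_mul], Or.inr (Dm_mul_Am z w)⟩
    · exact ⟨z * w, by rw [mul_pow, hz, hw, one_mul], Or.inr (Am_mul_Dm z w)⟩
    · exact ⟨z⁻¹ * w, by rw [mul_pow, inv_pow, hz, hw, inv_one, one_mul], Or.inl (Am_mul_Am z w)⟩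
lemma omega_facts (n : ℕ) (hn : 3 ≤ n) (ω : ℂ)
    (hω : ω = Complex.exp (2 * Real.pi * Complex.I / (2 * n))) :
    ω ^ (2 * n) = 1 ∧ ω ^ n = -1 ∧ ω ^ 2 ≠ 1 ∧ ω ^ 2 ≠ -1 ∧
      ω ^ 2 = Complex.exp (2 * Real.pi * Complex.I / n) := by
  have hn0 : (n : ℂ) ≠ 0 := by
    exact_mod_cast Nat.cast_ne_zero.mpr (by omega)
  have hπ : (Real.pi : ℂ) ≠ 0 := by
    exact_mod_cast Complex.ofReal_ne_zero.mpr Real.pi_ne_zero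
  have hI : Complex.I ≠ 0 := Complex.I_ne_zero
  have h2 : (2 : ℂ) ≠ 0 := two_ne_zero
  have hsq : ω ^ 2 = Complex.exp (2 * Real.pi * Complex.I / n) := by
    rw [hω, ← Complex.exp_nat_mul]
    congr 1
    field_simp
    ring
  have hp2n : ω ^ (2 * n) = 1 := by
    rw [hω, ← Complex.exp_nat_mul]
    rw [show ((2 * n : ℕ) : ℂ) * (2 * Real.pi * Complex.I / (2 * n)) = 2 * Real.pi * Complex.I by
      push_cast; field_simp]
    exact Complex.exp_two_pi_mul_I
  have hpn : ω ^ n = -1 := by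
    rw [hω, ← Complex.exp_nat_mul]
    rw [show ((n : ℕ) : ℂ) * (2 * Real.pi * Complex.I / (2 * n)) = Real.pi * Complex.I by
      field_simp]
    exact Complex.exp_pi_mul_I
  have hπI : (Real.pi : ℂ) * Complex.I ≠ 0 := mul_ne_zero hπ hI
  refine ⟨hp2n, hpn, ?_, ?_, hsq⟩
  · rw [hsq]
    intro h
    rw [Complex.exp_eq_one_iff] at h
    obtain ⟨k, hk⟩ := h
    have hmul : 2 * (Real.pi : ℂ) * Complex.I = (k : ℂ) * (2 * Real.pi * Complex.I) * n := by
      have h0 : 2 * (Real.pi : ℂ) * Complex.I / (n : ℂ) * n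
          = (k : ℂ) * (2 * Real.pi * Complex.I) * n := by rw [hk]
      rwa [div_mul_cancel₀ _ hn0] at h0
    have h1 : (2 : ℂ) * (Real.pi * Complex.I) = (2 * k * n) * (Real.pi * Complex.I) := by
      linear_combination hmul
    have h2' : (2 : ℂ) = 2 * k * n := mul_right_cancel₀ hπI h1
    have h3 : (2 : ℤ) = 2 * k * n := by exact_mod_cast h2'
    have hdvd : (n : ℤ) ∣ 2 := ⟨2 * k, by linarith⟩
    have := Int.le_of_dvd two_pos hdvd
    omega
  · rw [hsq]
    intro h
    have h' : Complex.exp (2 * Real.pi * Complex.I / n) = Complex.exp (Real.pi * Complex.I) := by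
      rw [h, Complex.exp_pi_mul_I]
    rw [Complex.exp_eq_exp_iff_exists_int] at h'
    obtain ⟨k, hk⟩ := h'
    have hmul : 2 * (Real.pi : ℂ) * Complex.I =
        (Real.pi * Complex.I + (k : ℂ) * (2 * Real.pi * Complex.I)) * n := by
      have h0 : 2 * (Real.pi : ℂ) * Complex.I / (n : ℂ) * n
          = (Real.pi * Complex.I + (k : ℂ) * (2 * Real.pi * Complex.I)) * n := by rw [hk]
      rwa [div_mul_cancel₀ _ hn0] at h0
    have h1 : (2 : ℂ) * (Real.pi * Complex.I) = ((n : ℂ) + 2 * k * n) * (Real.pi * Complex.I) := by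
      linear_combination hmul
    have h2' : (2 : ℂ) = (n : ℂ) + 2 * k * n := mul_right_cancel₀ hπI h1
    have h3 : (2 : ℤ) = n + 2 * k * n := by exact_mod_cast h2'
    have hdvd : (n : ℤ) ∣ 2 := ⟨1 + 2 * k, by linarith⟩
    have := Int.le_of_dvd two_pos hdvd
    omega
lemma swapMat_mul_apply (X : Matrix (Fin 2 × Fin 2) (Fin 2 × Fin 2) ℂ) (p q : Fin 2 × Fin 2) :
    (swapMat * X) p q = X (p.2, p.1) q := by
  rw [Matrix.mul_apply]
  rw [Finset.sum_eq_single (p.2, p.1)]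
  · simp [swapMat]
  · intro b _ hb
    have : ¬(p.1 = b.2 ∧ p.2 = b.1) := by
      rintro ⟨h1, h2⟩; exact hb (by rw [Prod.ext_iff]; exact ⟨h2.symm, h1.symm⟩)
    simp [swapMat, this]
  · intro h; exact absurd (Finset.mem_univ _) h

lemma mul_swapMat_apply (X : Matrix (Fin 2 × Fin 2) (Fin 2 × Fin 2) ℂ) (p q : Fin 2 × Fin 2) :
    (X * swapMat) p q = X p (q.2, q.1) := by
  rw [Matrix.mul_apply]
  rw [Finset.sum_eq_single (q.2, q.1)]
  · simp [swapMat]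
  · intro b _ hb
    have : ¬(b.1 = q.2 ∧ b.2 = q.1) := by
      rintro ⟨h1, h2⟩; exact hb (by rw [Prod.ext_iff]; exact ⟨h1, h2⟩)
    simp [swapMat, this]
  · intro h; exact absurd (Finset.mem_univ _) h

lemma swap_conj_kron (a b : Matrix (Fin 2) (Fin 2) ℂ) :
    swapMat * (a ⊗ₖ b) * swapMat = b ⊗ₖ a := by
  ext p q
  rw [mul_swapMat_apply, swapMat_mul_apply]
  simp [Matrix.kroneckerMap_apply, mul_comm]

lemma swap_mul_swap : swapMat * swapMat = 1 := by
  ext p q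
  rw [swapMat_mul_apply]
  simp only [swapMat, Matrix.one_apply, Prod.ext_iff]
  by_cases h1 : p.1 = q.1 <;> by_cases h2 : p.2 = q.2 <;>
    simp [h1, h2, eq_comm, and_comm]

lemma swap_star : swapMatᴴ = swapMat := by
  ext p q
  simp only [Matrix.conjTranspose_apply, swapMat]
  have hiff : (p.1 = q.2 ∧ p.2 = q.1) ↔ (q.1 = p.2 ∧ q.2 = p.1) := by
    constructor <;> rintro ⟨h1, h2⟩ <;> exact ⟨h2.symm, h1.symm⟩
  by_cases h : q.1 = p.2 ∧ q.2 = p.1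
  · rw [if_pos h, if_pos (hiff.mpr h)]; simp
  · rw [if_neg h, if_neg (fun hc => h (hiff.mp hc))]; simp

lemma swap_unitary : swapMat ∈ Matrix.unitaryGroup (Fin 2 × Fin 2) ℂ := by
  rw [Matrix.mem_unitaryGroup_iff]
  show swapMat * swapMatᴴ = 1
  rw [swap_star, swap_mul_swap]

section conj
variable {N : Matrix (Fin 2 × Fin 2) (Fin 2 × Fin 2) ℂ}

lemma conj_mul (hNl : Nᴴ * N = 1) (x y : Matrix (Fin 2 × Fin 2) (Fin 2 × Fin 2) ℂ) :
    (N * x * Nᴴ) * (N * y * Nᴴ) = N * (x * y) * Nᴴ := by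
  simp only [mul_assoc]
  rw [← mul_assoc Nᴴ N (y * Nᴴ), hNl, one_mul]

lemma conj_one (hNr : N * Nᴴ = 1) : N * 1 * Nᴴ = 1 := by rw [mul_one, hNr]

lemma conj_pow (hNl : Nᴴ * N = 1) (hNr : N * Nᴴ = 1) (x : Matrix (Fin 2 × Fin 2) (Fin 2 × Fin 2) ℂ) (k : ℕ) :
    (N * x * Nᴴ) ^ k = N * x ^ k * Nᴴ := by
  induction k with
  | zero => rw [pow_zero, pow_zero, conj_one hNr]
  | succ k ih => rw [pow_succ, pow_succ, ih, conj_mul hNl]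

lemma conj_inj (hNl : Nᴴ * N = 1) {x y : Matrix (Fin 2 × Fin 2) (Fin 2 × Fin 2) ℂ}
    (h : N * x * Nᴴ = N * y * Nᴴ) : x = y := by
  have h2 := congrArg (fun z => Nᴴ * z * N) h
  simp only [← mul_assoc, hNl, one_mul] at h2
  simpa only [mul_assoc, hNl, mul_one] using h2

lemma conj_neg (x : Matrix (Fin 2 × Fin 2) (Fin 2 × Fin 2) ℂ) :
    N * (-x) * Nᴴ = -(N * x * Nᴴ) := by
  simp

lemma conj_smul (c : ℂ) (x : Matrix (Fin 2 × Fin 2) (Fin 2 × Fin 2) ℂ) :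
    N * (c • x) * Nᴴ = c • (N * x * Nᴴ) := by
  simp [Matrix.mul_smul, Matrix.smul_mul]

end conj

lemma kron_neg_left (a b : Matrix (Fin 2) (Fin 2) ℂ) : (-a) ⊗ₖ b = -(a ⊗ₖ b) := by
  ext p q
  simp [Matrix.kroneckerMap_apply]

lemma kron_pow_left (a : Matrix (Fin 2) (Fin 2) ℂ) (k : ℕ) :
    (a ⊗ₖ (1 : Matrix (Fin 2) (Fin 2) ℂ)) ^ k = (a ^ k) ⊗ₖ (1 : Matrix (Fin 2) (Fin 2) ℂ) := by
  induction k with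
  | zero => simp [Matrix.one_kronecker_one]
  | succ k ih => rw [pow_succ, pow_succ, ih, ← Matrix.mul_kronecker_mul, mul_one]

lemma kron_pow_right (b : Matrix (Fin 2) (Fin 2) ℂ) (k : ℕ) :
    ((1 : Matrix (Fin 2) (Fin 2) ℂ) ⊗ₖ b) ^ k = (1 : Matrix (Fin 2) (Fin 2) ℂ) ⊗ₖ (b ^ k) := by
  induction k with
  | zero => simp [Matrix.one_kronecker_one]
  | succ k ih => rw [pow_succ, pow_succ, ih, ← Matrix.mul_kronecker_mul, mul_one]

lemma Dm_eq_diagonal (z : ℂ) : Dm z = Matrix.diagonal ![z, z⁻¹] := by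
  ext i j
  fin_cases i <;> fin_cases j <;> simp [Dm, Matrix.diagonal]

lemma DD_eq_diagonal (z w : ℂ) :
    Dm z ⊗ₖ Dm w = Matrix.diagonal (fun p : Fin 2 × Fin 2 => ![z, z⁻¹] p.1 * ![w, w⁻¹] p.2) := by
  rw [Dm_eq_diagonal, Dm_eq_diagonal, Matrix.diagonal_kronecker_diagonal]

lemma trace_DD (z w : ℂ) : Matrix.trace (Dm z ⊗ₖ Dm w) = (z + z⁻¹) * (w + w⁻¹) := by
  rw [Matrix.trace_kronecker]
  simp [Dm, Matrix.trace_fin_two]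

lemma det_DD_sub (z w l : ℂ) :
    Matrix.det (Dm z ⊗ₖ Dm w - l • 1) =
      (z * w - l) * (z * w⁻¹ - l) * ((z⁻¹ * w - l) * (z⁻¹ * w⁻¹ - l)) := by
  rw [DD_eq_diagonal, Matrix.smul_one_eq_diagonal, Matrix.diagonal_sub, Matrix.det_diagonal,
    Fintype.prod_prod_type]
  simp [Fin.prod_univ_two]

lemma main_case
    (Gs : Set (Matrix (Fin 2) (Fin 2) ℂ))
    (hcls : ∀ g ∈ Gs, ∃ z : ℂ, z ≠ 0 ∧ (g = Dm z ∨ g = Am z))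
    (hBG : Am 1 ∈ Gs) (h1G : (1 : Matrix (Fin 2) (Fin 2) ℂ) ∈ Gs)
    (N : Matrix (Fin 2 × Fin 2) (Fin 2 × Fin 2) ℂ)
    (hNl : Nᴴ * N = 1) (hNr : N * Nᴴ = 1)
    (himg : (fun g => N * g * Nᴴ) '' tensorSet Gs = tensorSet Gs)
    (f g : Fin 2 → Fin 2) (hf : Function.Injective f) (hg : Function.Injective g)
    (hsupp : ∀ p q : Fin 2 × Fin 2, N p q ≠ 0 → q.1 = f p.1 ∧ q.2 = g p.2) :
    ∃ A B' : Matrix (Fin 2) (Fin 2) ℂ, A ∈ Matrix.unitaryGroup (Fin 2) ℂ ∧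
      B' ∈ Matrix.unitaryGroup (Fin 2) ℂ ∧ N = A ⊗ₖ B' := by
  have hsupp' : ∀ p q : Fin 2 × Fin 2, q ≠ (f p.1, g p.2) → N p q = 0 := by
    intro p q hq
    by_contra h
    obtain ⟨h1, h2⟩ := hsupp p q h
    exact hq (Prod.ext_iff.mpr ⟨h1, h2⟩)
  -- unit entries
  have hu : ∀ p : Fin 2 × Fin 2, N p (f p.1, g p.2) * star (N p (f p.1, g p.2)) = 1 := by
    intro p
    have h1 : (N * Nᴴ) p p = 1 := by rw [hNr, Matrix.one_apply_eq]
    rw [Matrix.mul_apply, Finset.sum_eq_single (f p.1, g p.2)] at h1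
    · rw [Matrix.conjTranspose_apply] at h1; exact h1
    · intro b _ hb
      rw [hsupp' p b hb, zero_mul]
    · exact fun h => absurd (Finset.mem_univ _) h
  have hune : ∀ p : Fin 2 × Fin 2, N p (f p.1, g p.2) ≠ 0 := by
    intro p h
    have := hu p
    rw [h, zero_mul] at this
    exact one_ne_zero this.symm
  -- image of B ⊗ 1
  set X : Matrix (Fin 2 × Fin 2) (Fin 2 × Fin 2) ℂ := (Am 1) ⊗ₖ (1 : Matrix (Fin 2) (Fin 2) ℂ)
    with hX
  have hXmem : X ∈ tensorSet Gs := ⟨Am 1, hBG, 1, h1G, rfl⟩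
  have hMmem : N * X * Nᴴ ∈ tensorSet Gs := by
    rw [← himg]; exact ⟨X, hXmem, rfl⟩
  obtain ⟨g₁, hg₁, g₂, hg₂, hM⟩ := hMmem
  -- entry formula
  have hentry : ∀ p q : Fin 2 × Fin 2,
      (N * X * Nᴴ) p q
        = N p (f p.1, g p.2) * X (f p.1, g p.2) (f q.1, g q.2) * star (N q (f q.1, g q.2)) := by
    intro p q
    rw [Matrix.mul_apply, Finset.sum_eq_single ((f q.1, g q.2) : Fin 2 × Fin 2)]
    · rw [Matrix.mul_apply, Finset.sum_eq_single ((f p.1, g p.2) : Fin 2 × Fin 2)]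
      · rw [Matrix.conjTranspose_apply]
      · intro b _ hb
        rw [hsupp' p b hb, zero_mul]
      · exact fun h => absurd (Finset.mem_univ _) h
    · intro b _ hb
      rw [Matrix.conjTranspose_apply, hsupp' q b hb, star_zero, mul_zero]
    · exact fun h => absurd (Finset.mem_univ _) h
  have hAm_diag : ∀ a : Fin 2, (Am 1) a a = 0 := by
    intro a; fin_cases a <;> simp [Am]
  have hAm_off : ∀ a c : Fin 2, a ≠ c → (Am 1) a c = 1 := by
    intro a c h
    fin_cases a <;> fin_cases c <;> first | exact absurd rfl h | simp [Am]
  have hf01 : f 0 ≠ f 1 := fun hc => absurd (hf hc) (by decide)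
  have hE : ∀ p q : Fin 2 × Fin 2,
      g₁ p.1 q.1 * g₂ p.2 q.2
        = N p (f p.1, g p.2) * X (f p.1, g p.2) (f q.1, g q.2) * star (N q (f q.1, g q.2)) := by
    intro p q
    have h0 := hentry p q
    rw [hM] at h0
    rw [← h0, Matrix.kroneckerMap_apply]
  -- specific entries
  have hX_off : ∀ (a b : Fin 2 × Fin 2), a.1 ≠ b.1 → a.2 = b.2 → X a b = 1 := by
    intro a b h1 h2
    rw [hX, Matrix.kroneckerMap_apply, hAm_off _ _ h1, h2, Matrix.one_apply_eq, mul_one]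
  have hX_diag1 : ∀ (a b : Fin 2 × Fin 2), a.1 = b.1 → X a b = 0 := by
    intro a b h1
    rw [hX, Matrix.kroneckerMap_apply, h1, hAm_diag, zero_mul]
  have he2 := hE ((0 : Fin 2), (0 : Fin 2)) ((1 : Fin 2), (0 : Fin 2))
  have he3 := hE ((0 : Fin 2), (1 : Fin 2)) ((1 : Fin 2), (1 : Fin 2))
  have he4 := hE ((1 : Fin 2), (0 : Fin 2)) ((0 : Fin 2), (0 : Fin 2))
  rw [hX_off _ _ (by simpa using hf01) (by simp), mul_one] at he2 he3
  rw [hX_off _ _ (by simpa using hf01.symm) (by simp), mul_one] at he4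
  -- classify g₁ g₂
  obtain ⟨z₁, hz₁0, hc₁⟩ := hcls g₁ hg₁
  obtain ⟨z₂, hz₂0, hc₂⟩ := hcls g₂ hg₂
  have hg₁A : g₁ = Am z₁ := by
    rcases hc₁ with rfl | h
    · exfalso
      simp only [Dm] at he2
      rw [show (!![z₁, 0; 0, z₁⁻¹] : Matrix (Fin 2) (Fin 2) ℂ) 0 1 = 0 by simp] at he2
      rw [zero_mul] at he2
      exact mul_ne_zero (hune ((0 : Fin 2), (0 : Fin 2)))
        (star_ne_zero.mpr (hune ((1 : Fin 2), (0 : Fin 2)))) he2.symm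
    · exact h
  have hg₂D : g₂ = Dm z₂ := by
    rcases hc₂ with h | rfl
    · exact h
    · exfalso
      rw [show (Am z₂) 0 0 = 0 by simp [Am]] at he2
      rw [mul_zero] at he2
      exact mul_ne_zero (hune ((0 : Fin 2), (0 : Fin 2)))
        (star_ne_zero.mpr (hune ((1 : Fin 2), (0 : Fin 2)))) he2.symm
  subst hg₁A hg₂D
  rw [show (Am z₁) 0 1 = z₁⁻¹ by simp [Am], show (Dm z₂) 0 0 = z₂ by simp [Dm]] at he2
  rw [show (Am z₁) 0 1 = z₁⁻¹ by simp [Am], show (Dm z₂) 1 1 = z₂⁻¹ by simp [Dm]] at he3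
  rw [show (Am z₁) 1 0 = z₁ by simp [Am], show (Dm z₂) 0 0 = z₂ by simp [Dm]] at he4
  -- z₂ squared is 1
  have key1 : (z₁⁻¹ * z₂) * (z₁ * z₂) = 1 := by
    rw [he2, he4]
    linear_combination (N ((0 : Fin 2), (0 : Fin 2)) (f 0, g 0)
        * star (N ((0 : Fin 2), (0 : Fin 2)) (f 0, g 0))) * hu ((1 : Fin 2), (0 : Fin 2))
      + hu ((0 : Fin 2), (0 : Fin 2))
  have hz2 : z₂ * z₂ = 1 := by
    have h := key1
    rw [show (z₁⁻¹ * z₂) * (z₁ * z₂) = (z₁⁻¹ * z₁) * (z₂ * z₂) from by ring,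
      inv_mul_cancel₀ hz₁0, one_mul] at h
    exact h
  have hz2inv : z₂⁻¹ = z₂ := inv_eq_of_mul_eq_one_right hz2
  have he2' : z₁⁻¹ * z₂
      = N ((0 : Fin 2), (0 : Fin 2)) (f 0, g 0) * star (N ((1 : Fin 2), (0 : Fin 2)) (f 1, g 0)) := he2
  have he3' : z₁⁻¹ * z₂⁻¹
      = N ((0 : Fin 2), (1 : Fin 2)) (f 0, g 1) * star (N ((1 : Fin 2), (1 : Fin 2)) (f 1, g 1)) := he3
  have key : N ((0 : Fin 2), (0 : Fin 2)) (f 0, g 0) * star (N ((1 : Fin 2), (0 : Fin 2)) (f 1, g 0))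
      = N ((0 : Fin 2), (1 : Fin 2)) (f 0, g 1) * star (N ((1 : Fin 2), (1 : Fin 2)) (f 1, g 1)) := by
    rw [← he2', ← he3', hz2inv]
  set a := N ((0 : Fin 2), (0 : Fin 2)) (f 0, g 0) with ha
  set b := N ((1 : Fin 2), (0 : Fin 2)) (f 1, g 0) with hb
  set c := N ((0 : Fin 2), (1 : Fin 2)) (f 0, g 1) with hc
  set d := N ((1 : Fin 2), (1 : Fin 2)) (f 1, g 1) with hd
  have huA : a * star a = 1 := hu ((0 : Fin 2), (0 : Fin 2))
  have huB : b * star b = 1 := hu ((1 : Fin 2), (0 : Fin 2))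
  have huC : c * star c = 1 := hu ((0 : Fin 2), (1 : Fin 2))
  have huD : d * star d = 1 := hu ((1 : Fin 2), (1 : Fin 2))
  have key' : a * star b = c * star d := key
  have key2 : d = b * star a * c := by
    linear_combination (b * star a * d) * key' - (d * (b * star b)) * huA - d * huB
      + (b * star a * c) * huD
  -- construct A and B'
  set A : Matrix (Fin 2) (Fin 2) ℂ :=
    Matrix.of (fun x x' : Fin 2 => if x' = f x then (if x = 0 then 1 else b * star a) else 0)
    with hA
  set B' : Matrix (Fin 2) (Fin 2) ℂ :=
    Matrix.of (fun y y' : Fin 2 => if y' = g y then (if y = 0 then a else c) else 0) with hB'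
  have hsa : star a * a = 1 := by rw [mul_comm]; exact huA
  have fin2 : ∀ t : Fin 2, t = 0 ∨ t = 1 := by decide
  have hn10 : ¬((1 : Fin 2) = 0) := by decide
  have hprod : ∀ x y : Fin 2,
      (if x = (0 : Fin 2) then (1 : ℂ) else b * star a) * (if y = (0 : Fin 2) then a else c)
        = N (x, y) (f x, g y) := by
    intro x y
    rcases fin2 x with rfl | rfl <;> rcases fin2 y with rfl | rfl
    · rw [if_pos rfl, if_pos rfl, one_mul, ha]
    · rw [if_pos rfl, if_neg hn10, one_mul, hc]
    · rw [if_neg hn10, if_pos rfl, mul_assoc, hsa, mul_one, hb]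
    · rw [if_neg hn10, if_neg hn10, ← hd]
      exact key2.symm
  -- N = A ⊗ B'
  have hNAB : N = A ⊗ₖ B' := by
    ext ⟨x, y⟩ ⟨x', y'⟩
    rw [Matrix.kroneckerMap_apply]
    by_cases h1 : x' = f x <;> by_cases h2 : y' = g y
    · subst h1; subst h2
      rw [hA, hB']
      show N (x, y) (f x, g y) = (if f x = f x then _ else 0) * (if g y = g y then _ else 0)
      rw [if_pos rfl, if_pos rfl, hprod x y]
    · have : ((x', y') : Fin 2 × Fin 2) ≠ (f (x, y).1, g (x, y).2) := by
        intro hcon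
        exact h2 (congrArg Prod.snd hcon)
      rw [hsupp' (x, y) (x', y') this]
      show (0 : ℂ) = _ * (if y' = g y then _ else 0)
      rw [if_neg h2, mul_zero]
    · have : ((x', y') : Fin 2 × Fin 2) ≠ (f (x, y).1, g (x, y).2) := by
        intro hcon
        exact h1 (congrArg Prod.fst hcon)
      rw [hsupp' (x, y) (x', y') this]
      show (0 : ℂ) = (if x' = f x then _ else 0) * _
      rw [if_neg h1, zero_mul]
    · have : ((x', y') : Fin 2 × Fin 2) ≠ (f (x, y).1, g (x, y).2) := by
        intro hcon
        exact h1 (congrArg Prod.fst hcon)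
      rw [hsupp' (x, y) (x', y') this]
      show (0 : ℂ) = (if x' = f x then _ else 0) * _
      rw [if_neg h1, zero_mul]
  have hAunit : A ∈ Matrix.unitaryGroup (Fin 2) ℂ := by
    rw [Matrix.mem_unitaryGroup_iff]
    ext x y
    rw [Matrix.mul_apply, Finset.sum_eq_single (f x)]
    · rw [Matrix.star_apply]
      by_cases hxy : x = y
      · subst hxy
        rw [Matrix.one_apply_eq]
        show (if f x = f x then _ else 0) * star (if f x = f x then _ else 0) = 1
        rw [if_pos rfl]
        rcases fin2 x with rfl | rfl
        · rw [if_pos rfl]; simp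
        · rw [if_neg hn10]
          have hstar : star (b * star a) = star b * a := by
            rw [StarMul.star_mul, star_star, mul_comm]
          rw [hstar]
          linear_combination (b * star b) * huA + huB
      · rw [Matrix.one_apply_ne hxy]
        have hfne : ¬(f x = f y) := fun hcon => hxy (hf hcon)
        show _ * star (if f x = f y then _ else 0) = 0
        rw [if_neg hfne, star_zero, mul_zero]
    · intro t _ ht
      show (if t = f x then _ else 0) * _ = 0
      rw [if_neg ht, zero_mul]
    · exact fun h => absurd (Finset.mem_univ _) h
  have hBunit : B' ∈ Matrix.unitaryGroup (Fin 2) ℂ := by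
    rw [Matrix.mem_unitaryGroup_iff]
    ext x y
    rw [Matrix.mul_apply, Finset.sum_eq_single (g x)]
    · rw [Matrix.star_apply]
      by_cases hxy : x = y
      · subst hxy
        rw [Matrix.one_apply_eq]
        show (if g x = g x then _ else 0) * star (if g x = g x then _ else 0) = 1
        rw [if_pos rfl]
        rcases fin2 x with rfl | rfl
        · rw [if_pos rfl]; exact huA
        · rw [if_neg hn10]; exact huC
      · rw [Matrix.one_apply_ne hxy]
        have hgne : ¬(g x = g y) := fun hcon => hxy (hg hcon)
        show _ * star (if g x = g y then _ else 0) = 0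
        rw [if_neg hgne, star_zero, mul_zero]
    · intro t _ ht
      show (if t = g x then _ else 0) * _ = 0
      rw [if_neg ht, zero_mul]
    · exact fun h => absurd (Finset.mem_univ _) h
  exact ⟨A, B', hAunit, hBunit, hNAB⟩
lemma diag_image
    (ω : ℂ) (hω0 : ω ≠ 0) (hωn1 : ω ^ 2 ≠ -1)
    (Gs : Set (Matrix (Fin 2) (Fin 2) ℂ))
    (hcls : ∀ g ∈ Gs, ∃ z : ℂ, z ≠ 0 ∧ (g = Dm z ∨ g = Am z))
    (N : Matrix (Fin 2 × Fin 2) (Fin 2 × Fin 2) ℂ)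
    (hNl : Nᴴ * N = 1) (hNr : N * Nᴴ = 1)
    (himg : (fun g => N * g * Nᴴ) '' tensorSet Gs = tensorSet Gs)
    (X : Matrix (Fin 2 × Fin 2) (Fin 2 × Fin 2) ℂ) (hXmem : X ∈ tensorSet Gs)
    (hdet : ∀ l : ℂ, (X - l • 1).det = (ω - l) * (ω - l) * ((ω⁻¹ - l) * (ω⁻¹ - l)))
    (htr : X.trace = (ω + ω⁻¹) * (1 + 1)) :
    N * X * Nᴴ = Dm ω ⊗ₖ Dm 1 ∨ N * X * Nᴴ = Dm ω⁻¹ ⊗ₖ Dm 1 ∨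
      N * X * Nᴴ = Dm 1 ⊗ₖ Dm ω ∨ N * X * Nᴴ = Dm 1 ⊗ₖ Dm ω⁻¹ := by
  have fin2 : ∀ t : Fin 2, t = 0 ∨ t = 1 := by decide
  have htrX : (ω + ω⁻¹) ≠ 0 := by
    intro h
    apply hωn1
    have h2 := congrArg (· * ω) h
    simp only [add_mul, zero_mul] at h2
    rw [inv_mul_cancel₀ hω0] at h2
    have : ω * ω = -1 := by linear_combination h2
    rw [sq]; exact this
  have hMmem : N * X * Nᴴ ∈ tensorSet Gs := by
    rw [← himg]; exact ⟨X, hXmem, rfl⟩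
  obtain ⟨g₁, hg₁, g₂, hg₂, hM⟩ := hMmem
  have htrinv : (N * X * Nᴴ).trace = X.trace := by
    rw [Matrix.trace_mul_comm, ← mul_assoc, hNl, one_mul]
  have htrg : g₁.trace * g₂.trace ≠ 0 := by
    rw [← Matrix.trace_kronecker, ← hM, htrinv, htr]
    exact mul_ne_zero htrX (by norm_num)
  obtain ⟨z₁, hz₁0, hc₁⟩ := hcls g₁ hg₁
  obtain ⟨z₂, hz₂0, hc₂⟩ := hcls g₂ hg₂
  have htrAm : ∀ z : ℂ, (Am z).trace = 0 := by
    intro z; rw [Matrix.trace_fin_two]; simp [Am]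
  have hg₁D : g₁ = Dm z₁ := by
    rcases hc₁ with h | rfl
    · exact h
    · exact absurd (by rw [htrAm, zero_mul]) htrg
  have hg₂D : g₂ = Dm z₂ := by
    rcases hc₂ with h | rfl
    · exact h
    · exact absurd (by rw [htrAm, mul_zero]) htrg
  subst hg₁D hg₂D
  -- determinant invariance
  have hdet2 : ∀ l : ℂ, ((N * X * Nᴴ) - l • 1).det = (X - l • 1).det := by
    intro l
    have hconj : (N * X * Nᴴ) - l • 1 = N * (X - l • 1) * Nᴴ := by
      rw [Matrix.mul_sub, Matrix.sub_mul]
      congr 1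
      rw [Matrix.mul_smul, Matrix.smul_mul, mul_one, hNr]
    rw [hconj, Matrix.det_mul, Matrix.det_mul]
    have hdN : N.det * Nᴴ.det = 1 := by rw [← Matrix.det_mul, hNr, Matrix.det_one]
    calc N.det * (X - l • 1).det * Nᴴ.det
        = (N.det * Nᴴ.det) * (X - l • 1).det := by ring
      _ = (X - l • 1).det := by rw [hdN, one_mul]
  have hLdet : ∀ l : ℂ,
      (z₁ * z₂ - l) * (z₁ * z₂⁻¹ - l) * ((z₁⁻¹ * z₂ - l) * (z₁⁻¹ * z₂⁻¹ - l))
        = (ω - l) * (ω - l) * ((ω⁻¹ - l) * (ω⁻¹ - l)) := by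
    intro l
    rw [← det_DD_sub, ← hM, hdet2, hdet]
  have hfac : ∀ l : ℂ, (ω - l) * (ω - l) * ((ω⁻¹ - l) * (ω⁻¹ - l)) = 0 →
      l = ω ∨ l = ω⁻¹ := by
    intro l h
    rcases mul_eq_zero.mp h with h' | h' <;> rcases mul_eq_zero.mp h' with h'' | h''
    · exact Or.inl (sub_eq_zero.mp h'').symm
    · exact Or.inl (sub_eq_zero.mp h'').symm
    · exact Or.inr (sub_eq_zero.mp h'').symm
    · exact Or.inr (sub_eq_zero.mp h'').symm
  have h12 : z₁ * z₂ = ω ∨ z₁ * z₂ = ω⁻¹ := by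
    apply hfac
    rw [← hLdet (z₁ * z₂), sub_self, zero_mul, zero_mul]
  have h12' : z₁ * z₂⁻¹ = ω ∨ z₁ * z₂⁻¹ = ω⁻¹ := by
    apply hfac
    rw [← hLdet (z₁ * z₂⁻¹), sub_self, mul_zero, zero_mul]
  rw [hM]
  have heq : ∀ w₁ w₂ : ℂ, z₁ * z₂ = w₁ * w₂ → z₁ * z₂⁻¹ = w₁ * w₂⁻¹ →
      Dm z₁ ⊗ₖ Dm z₂ = Dm w₁ ⊗ₖ Dm w₂ := by
    intro w₁ w₂ hh1 hh2
    rw [DD_eq_diagonal, DD_eq_diagonal]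
    refine congrArg Matrix.diagonal ?_
    funext p
    obtain ⟨x, y⟩ := p
    have hinv1 : z₁⁻¹ * z₂⁻¹ = w₁⁻¹ * w₂⁻¹ := by
      rw [← mul_inv, ← mul_inv, hh1]
    have hinv2 : z₁⁻¹ * z₂ = w₁⁻¹ * w₂ := by
      have h := congrArg (·⁻¹) hh2
      simp only [mul_inv, inv_inv] at h
      linear_combination h
    rcases fin2 x with rfl | rfl <;> rcases fin2 y with rfl | rfl <;>
      simp only [Matrix.cons_val_zero, Matrix.cons_val_one, Matrix.head_cons]
    · exact hh1
    · exact hh2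
    · exact hinv2
    · exact hinv1
  rcases h12 with h1 | h1 <;> rcases h12' with h2 | h2
  · exact Or.inl (heq ω 1 (by rw [h1, mul_one]) (by rw [h2, inv_one, mul_one]))
  · refine Or.inr (Or.inr (Or.inl (heq 1 ω (by rw [h1, one_mul]) (by rw [h2]; ring))))
  · refine Or.inr (Or.inr (Or.inr (heq 1 ω⁻¹ (by rw [h1, one_mul]) (by rw [h2, inv_inv, one_mul]))))
  · exact Or.inr (Or.inl (heq ω⁻¹ 1 (by rw [h1, mul_one]) (by rw [h2, inv_one, mul_one])))
lemma DmK1_diag (z : ℂ) :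
    Dm z ⊗ₖ Dm 1 = Matrix.diagonal (fun p : Fin 2 × Fin 2 => ![z, z⁻¹] p.1) := by
  rw [DD_eq_diagonal]
  refine congrArg Matrix.diagonal ?_
  funext p
  have h1 : ∀ t : Fin 2, (![(1 : ℂ), 1⁻¹] : Fin 2 → ℂ) t = 1 := by
    intro t
    fin_cases t <;> simp
  rw [h1, mul_one]

lemma K1Dm_diag (z : ℂ) :
    Dm 1 ⊗ₖ Dm z = Matrix.diagonal (fun p : Fin 2 × Fin 2 => ![z, z⁻¹] p.2) := by
  rw [DD_eq_diagonal]
  refine congrArg Matrix.diagonal ?_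
  funext p
  have h1 : ∀ t : Fin 2, (![(1 : ℂ), 1⁻¹] : Fin 2 → ℂ) t = 1 := by
    intro t
    fin_cases t <;> simp
  rw [h1, one_mul]

lemma coord_support (ω e : ℂ) (hωne : ω ≠ ω⁻¹) (he : e = ω ∨ e = ω⁻¹)
    (N : Matrix (Fin 2 × Fin 2) (Fin 2 × Fin 2) ℂ) (π : Fin 2 × Fin 2 → Fin 2)
    (hpoint : ∀ p q : Fin 2 × Fin 2, N p q * ![ω, ω⁻¹] (π q) = ![e, e⁻¹] (π p) * N p q) :
    ∃ f : Fin 2 → Fin 2, Function.Injective f ∧ ∀ p q, N p q ≠ 0 → π q = f (π p) := by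
  have fin2 : ∀ t : Fin 2, t = 0 ∨ t = 1 := by decide
  have key : ∀ p q, N p q ≠ 0 → (![ω, ω⁻¹] : Fin 2 → ℂ) (π q) = ![e, e⁻¹] (π p) := by
    intro p q h
    have h2 := hpoint p q
    rw [mul_comm (N p q)] at h2
    exact mul_right_cancel₀ h h2.symm |>.symm
  rcases he with rfl | rfl
  · refine ⟨id, Function.injective_id, ?_⟩
    intro p q h
    have hv := key p q h
    rcases fin2 (π q) with hq | hq <;> rcases fin2 (π p) with hp | hp <;>
        rw [hq, hp] at hv ⊢ <;> simp only [Matrix.cons_val_zero, Matrix.cons_val_one,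
          Matrix.head_cons, id] at hv ⊢
    · exact absurd hv hωne
    · exact absurd hv.symm hωne
  · refine ⟨(![1, 0] : Fin 2 → Fin 2), by decide, ?_⟩
    intro p q h
    have hv := key p q h
    rcases fin2 (π q) with hq | hq <;> rcases fin2 (π p) with hp | hp <;>
        rw [hq, hp] at hv ⊢ <;> simp only [Matrix.cons_val_zero, Matrix.cons_val_one,
          Matrix.head_cons, inv_inv] at hv ⊢
    · exact absurd hv hωne
    · exact absurd hv.symm hωne


lemma nonswap_case (ω : ℂ) (hωne : ω ≠ ω⁻¹)
    (Gs : Set (Matrix (Fin 2) (Fin 2) ℂ))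
    (hcls : ∀ g ∈ Gs, ∃ z : ℂ, z ≠ 0 ∧ (g = Dm z ∨ g = Am z))
    (hBG : Am 1 ∈ Gs) (h1G : (1 : Matrix (Fin 2) (Fin 2) ℂ) ∈ Gs)
    (N : Matrix (Fin 2 × Fin 2) (Fin 2 × Fin 2) ℂ)
    (hNl : Nᴴ * N = 1) (hNr : N * Nᴴ = 1)
    (himg : (fun g => N * g * Nᴴ) '' tensorSet Gs = tensorSet Gs)
    (e e' : ℂ) (he : e = ω ∨ e = ω⁻¹) (he' : e' = ω ∨ e' = ω⁻¹)
    (hP1 : N * (Dm ω ⊗ₖ Dm 1) * Nᴴ = Dm e ⊗ₖ Dm 1)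
    (hP2 : N * (Dm 1 ⊗ₖ Dm ω) * Nᴴ = Dm 1 ⊗ₖ Dm e') :
    ∃ A B' : Matrix (Fin 2) (Fin 2) ℂ, A ∈ Matrix.unitaryGroup (Fin 2) ℂ ∧
      B' ∈ Matrix.unitaryGroup (Fin 2) ℂ ∧ N = A ⊗ₖ B' := by
  have hint1 : N * (Dm ω ⊗ₖ Dm 1) = (Dm e ⊗ₖ Dm 1) * N := by
    have h := congrArg (fun M => M * N) hP1
    simpa only [mul_assoc, hNl, mul_one] using h
  have hint2 : N * (Dm 1 ⊗ₖ Dm ω) = (Dm 1 ⊗ₖ Dm e') * N := by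
    have h := congrArg (fun M => M * N) hP2
    simpa only [mul_assoc, hNl, mul_one] using h
  rw [DmK1_diag, DmK1_diag] at hint1
  rw [K1Dm_diag, K1Dm_diag] at hint2
  have hpoint1 : ∀ p q : Fin 2 × Fin 2,
      N p q * ![ω, ω⁻¹] q.1 = ![e, e⁻¹] p.1 * N p q := by
    intro p q
    have h := congrArg (fun M => M p q) hint1
    simpa only [Matrix.mul_diagonal, Matrix.diagonal_mul] using h
  have hpoint2 : ∀ p q : Fin 2 × Fin 2,
      N p q * ![ω, ω⁻¹] q.2 = ![e', e'⁻¹] p.2 * N p q := by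
    intro p q
    have h := congrArg (fun M => M p q) hint2
    simpa only [Matrix.mul_diagonal, Matrix.diagonal_mul] using h
  obtain ⟨f, hfinj, hfsupp⟩ := coord_support ω e hωne he N Prod.fst hpoint1
  obtain ⟨g, hginj, hgsupp⟩ := coord_support ω e' hωne he' N Prod.snd hpoint2
  exact main_case Gs hcls hBG h1G N hNl hNr himg f g hfinj hginj
    (fun p q h => ⟨hfsupp p q h, hgsupp p q h⟩)

lemma part1 (ω : ℂ) (hω0 : ω ≠ 0) (hωsq1 : ω ^ 2 ≠ 1) (hωn1 : ω ^ 2 ≠ -1)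
    (Gs : Set (Matrix (Fin 2) (Fin 2) ℂ))
    (hcls : ∀ g ∈ Gs, ∃ z : ℂ, z ≠ 0 ∧ (g = Dm z ∨ g = Am z))
    (hCG : Dm ω ∈ Gs) (hBG : Am 1 ∈ Gs) (h1G : (1 : Matrix (Fin 2) (Fin 2) ℂ) ∈ Gs)
    (N : Matrix (Fin 2 × Fin 2) (Fin 2 × Fin 2) ℂ)
    (hNl : Nᴴ * N = 1) (hNr : N * Nᴴ = 1)
    (himg : (fun g => N * g * Nᴴ) '' tensorSet Gs = tensorSet Gs) :
    ∃ A B' : Matrix (Fin 2) (Fin 2) ℂ, A ∈ Matrix.unitaryGroup (Fin 2) ℂ ∧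
      B' ∈ Matrix.unitaryGroup (Fin 2) ℂ ∧
      (N = A ⊗ₖ B' ∨ N = swapMat * (A ⊗ₖ B')) := by
  have hωne : ω ≠ ω⁻¹ := by
    intro h
    apply hωsq1
    have := congrArg (fun z => z * ω) h
    simp only [inv_mul_cancel₀ hω0] at this
    rw [sq]; exact this
  -- memberships
  have hX1mem : Dm ω ⊗ₖ Dm 1 ∈ tensorSet Gs := ⟨Dm ω, hCG, 1, h1G, by rw [Dm_one]⟩
  have hX2mem : Dm 1 ⊗ₖ Dm ω ∈ tensorSet Gs := ⟨1, h1G, Dm ω, hCG, by rw [Dm_one]⟩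
  have hdet1 : ∀ l : ℂ, (Dm ω ⊗ₖ Dm 1 - l • 1).det
      = (ω - l) * (ω - l) * ((ω⁻¹ - l) * (ω⁻¹ - l)) := by
    intro l
    rw [det_DD_sub, inv_one]
    ring
  have hdet2 : ∀ l : ℂ, (Dm 1 ⊗ₖ Dm ω - l • 1).det
      = (ω - l) * (ω - l) * ((ω⁻¹ - l) * (ω⁻¹ - l)) := by
    intro l
    rw [det_DD_sub, inv_one]
    ring
  have htr1 : (Dm ω ⊗ₖ Dm 1).trace = (ω + ω⁻¹) * (1 + 1) := by
    rw [trace_DD, inv_one]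
  have htr2 : (Dm 1 ⊗ₖ Dm ω).trace = (ω + ω⁻¹) * (1 + 1) := by
    rw [trace_DD, inv_one]; ring
  have h1 := diag_image ω hω0 hωn1 Gs hcls N hNl hNr himg _ hX1mem hdet1 htr1
  have h2 := diag_image ω hω0 hωn1 Gs hcls N hNl hNr himg _ hX2mem hdet2 htr2
  -- inequality facts
  have entry_ne : ∀ z w z' w' : ℂ, z * w ≠ z' * w' → Dm z ⊗ₖ Dm w ≠ Dm z' ⊗ₖ Dm w' := by
    intro z w z' w' hne h
    apply hne
    have := congrArg (fun M => M ((0 : Fin 2), (0 : Fin 2)) ((0 : Fin 2), (0 : Fin 2))) h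
    simpa [Matrix.kroneckerMap_apply, Dm] using this
  have hX1X2ne : Dm ω ⊗ₖ Dm 1 ≠ Dm 1 ⊗ₖ Dm ω := by
    intro h
    have := congrArg (fun M => M ((1 : Fin 2), (0 : Fin 2)) ((1 : Fin 2), (0 : Fin 2))) h
    simp [Matrix.kroneckerMap_apply, Dm] at this
    exact hωne this.symm
  have hXXprod : (Dm ω ⊗ₖ Dm 1) * (Dm 1 ⊗ₖ Dm ω) = Dm ω ⊗ₖ Dm ω := by
    rw [← Matrix.mul_kronecker_mul, Dm_mul_Dm, Dm_mul_Dm, mul_one, one_mul]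
  have hDDne1 : Dm ω ⊗ₖ Dm ω ≠ 1 := by
    intro h
    apply hωsq1
    have := congrArg (fun M => M ((0 : Fin 2), (0 : Fin 2)) ((0 : Fin 2), (0 : Fin 2))) h
    simp [Matrix.kroneckerMap_apply, Dm, Matrix.one_apply] at this
    rw [sq]; exact this
  -- contradiction helpers
  have contra_eq : ∀ Y : Matrix (Fin 2 × Fin 2) (Fin 2 × Fin 2) ℂ,
      N * (Dm ω ⊗ₖ Dm 1) * Nᴴ = Y → N * (Dm 1 ⊗ₖ Dm ω) * Nᴴ = Y → False := by
    intro Y hY1 hY2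
    exact hX1X2ne (conj_inj hNl (hY1.trans hY2.symm))
  have contra_prod : ∀ Y Z : Matrix (Fin 2 × Fin 2) (Fin 2 × Fin 2) ℂ,
      N * (Dm ω ⊗ₖ Dm 1) * Nᴴ = Y → N * (Dm 1 ⊗ₖ Dm ω) * Nᴴ = Z → Y * Z = 1 → False := by
    intro Y Z hY hZ hYZ
    have h := conj_mul hNl (Dm ω ⊗ₖ Dm 1) (Dm 1 ⊗ₖ Dm ω)
    rw [hY, hZ, hYZ, hXXprod] at h
    have h2 : N * (Dm ω ⊗ₖ Dm ω) * Nᴴ = N * 1 * Nᴴ := by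
      rw [conj_one hNr, ← h]
    exact hDDne1 (conj_inj hNl h2)
  have hprod_inv1 : (Dm ω ⊗ₖ Dm 1) * (Dm ω⁻¹ ⊗ₖ Dm 1) = 1 := by
    rw [← Matrix.mul_kronecker_mul, Dm_mul_Dm, Dm_mul_Dm, mul_inv_cancel₀ hω0, one_mul,
      Dm_one, Matrix.one_kronecker_one]
  have hprod_inv1' : (Dm ω⁻¹ ⊗ₖ Dm 1) * (Dm ω ⊗ₖ Dm 1) = 1 := by
    rw [← Matrix.mul_kronecker_mul, Dm_mul_Dm, Dm_mul_Dm, inv_mul_cancel₀ hω0, one_mul,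
      Dm_one, Matrix.one_kronecker_one]
  have hprod_inv2 : (Dm 1 ⊗ₖ Dm ω) * (Dm 1 ⊗ₖ Dm ω⁻¹) = 1 := by
    rw [← Matrix.mul_kronecker_mul, Dm_mul_Dm, Dm_mul_Dm, mul_inv_cancel₀ hω0, one_mul,
      Dm_one, Matrix.one_kronecker_one]
  have hprod_inv2' : (Dm 1 ⊗ₖ Dm ω⁻¹) * (Dm 1 ⊗ₖ Dm ω) = 1 := by
    rw [← Matrix.mul_kronecker_mul, Dm_mul_Dm, Dm_mul_Dm, inv_mul_cancel₀ hω0, one_mul,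
      Dm_one, Matrix.one_kronecker_one]
  -- swap case reduction
  have swap_case : ∀ e e' : ℂ, (e = ω ∨ e = ω⁻¹) → (e' = ω ∨ e' = ω⁻¹) →
      N * (Dm ω ⊗ₖ Dm 1) * Nᴴ = Dm 1 ⊗ₖ Dm e →
      N * (Dm 1 ⊗ₖ Dm ω) * Nᴴ = Dm e' ⊗ₖ Dm 1 →
      ∃ A B' : Matrix (Fin 2) (Fin 2) ℂ, A ∈ Matrix.unitaryGroup (Fin 2) ℂ ∧
        B' ∈ Matrix.unitaryGroup (Fin 2) ℂ ∧
        (N = A ⊗ₖ B' ∨ N = swapMat * (A ⊗ₖ B')) := by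
    intro e e' he he' hQ1 hQ2
    set N' := swapMat * N with hN'
    have hN'H : N'ᴴ = Nᴴ * swapMat := by
      rw [hN', Matrix.conjTranspose_mul, swap_star]
    have hN'l : N'ᴴ * N' = 1 := by
      rw [hN'H, hN']
      calc Nᴴ * swapMat * (swapMat * N) = Nᴴ * (swapMat * swapMat) * N := by
            simp only [mul_assoc]
        _ = 1 := by rw [swap_mul_swap, mul_one, hNl]
    have hN'r : N' * N'ᴴ = 1 := by
      rw [hN'H, hN']
      calc swapMat * N * (Nᴴ * swapMat) = swapMat * (N * Nᴴ) * swapMat := by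
            simp only [mul_assoc]
        _ = 1 := by rw [hNr, mul_one, swap_mul_swap]
    have hψ : ∀ Y : Matrix (Fin 2 × Fin 2) (Fin 2 × Fin 2) ℂ,
        N' * Y * N'ᴴ = swapMat * (N * Y * Nᴴ) * swapMat := by
      intro Y
      rw [hN'H, hN']
      simp only [mul_assoc]
    have himg' : (fun g => N' * g * N'ᴴ) '' tensorSet Gs = tensorSet Gs := by
      ext x
      constructor
      · rintro ⟨y, hy, rfl⟩
        have hyim : N * y * Nᴴ ∈ tensorSet Gs := by
          rw [← himg]; exact ⟨y, hy, rfl⟩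
        obtain ⟨a, haG, b, hbG, hab⟩ := hyim
        show N' * y * N'ᴴ ∈ tensorSet Gs
        rw [hψ, hab, swap_conj_kron]
        exact ⟨b, hbG, a, haG, rfl⟩
      · rintro ⟨a, haG, b, hbG, rfl⟩
        have : b ⊗ₖ a ∈ tensorSet Gs := ⟨b, hbG, a, haG, rfl⟩
        rw [← himg] at this
        obtain ⟨y, hy, hyeq⟩ := this
        have hyeq' : N * y * Nᴴ = b ⊗ₖ a := hyeq
        refine ⟨y, hy, ?_⟩
        show N' * y * N'ᴴ = _
        rw [hψ, hyeq', swap_conj_kron]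
    have hQ1' : N' * (Dm ω ⊗ₖ Dm 1) * N'ᴴ = Dm e ⊗ₖ Dm 1 := by
      rw [hψ, hQ1, swap_conj_kron]
    have hQ2' : N' * (Dm 1 ⊗ₖ Dm ω) * N'ᴴ = Dm 1 ⊗ₖ Dm e' := by
      rw [hψ, hQ2, swap_conj_kron]
    obtain ⟨A, B', hAU, hBU, hN'eq⟩ :=
      nonswap_case ω hωne Gs hcls hBG h1G N' hN'l hN'r himg' e e' he he' hQ1' hQ2'
    refine ⟨A, B', hAU, hBU, Or.inr ?_⟩
    calc N = (swapMat * swapMat) * N := by rw [swap_mul_swap, one_mul]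
      _ = swapMat * N' := by rw [hN', mul_assoc]
      _ = swapMat * (A ⊗ₖ B') := by rw [hN'eq]
  have nonswap_wrap : ∀ e e' : ℂ, (e = ω ∨ e = ω⁻¹) → (e' = ω ∨ e' = ω⁻¹) →
      N * (Dm ω ⊗ₖ Dm 1) * Nᴴ = Dm e ⊗ₖ Dm 1 →
      N * (Dm 1 ⊗ₖ Dm ω) * Nᴴ = Dm 1 ⊗ₖ Dm e' →
      ∃ A B' : Matrix (Fin 2) (Fin 2) ℂ, A ∈ Matrix.unitaryGroup (Fin 2) ℂ ∧
        B' ∈ Matrix.unitaryGroup (Fin 2) ℂ ∧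
        (N = A ⊗ₖ B' ∨ N = swapMat * (A ⊗ₖ B')) := by
    intro e e' he he' hQ1 hQ2
    obtain ⟨A, B', u1, u2, hh⟩ :=
      nonswap_case ω hωne Gs hcls hBG h1G N hNl hNr himg e e' he he' hQ1 hQ2
    exact ⟨A, B', u1, u2, Or.inl hh⟩
  rcases h1 with h1 | h1 | h1 | h1 <;> rcases h2 with h2 | h2 | h2 | h2
  · exact (contra_eq _ h1 h2).elim
  · exact (contra_prod _ _ h1 h2 hprod_inv1).elim
  · exact nonswap_wrap ω ω (Or.inl rfl) (Or.inl rfl) h1 h2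
  · exact nonswap_wrap ω ω⁻¹ (Or.inl rfl) (Or.inr rfl) h1 h2
  · exact (contra_prod _ _ h1 h2 hprod_inv1').elim
  · exact (contra_eq _ h1 h2).elim
  · exact nonswap_wrap ω⁻¹ ω (Or.inr rfl) (Or.inl rfl) h1 h2
  · exact nonswap_wrap ω⁻¹ ω⁻¹ (Or.inr rfl) (Or.inr rfl) h1 h2
  · exact swap_case ω ω (Or.inl rfl) (Or.inl rfl) h1 h2
  · exact swap_case ω ω⁻¹ (Or.inl rfl) (Or.inr rfl) h1 h2
  · exact (contra_eq _ h1 h2).elim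
  · exact (contra_prod _ _ h1 h2 hprod_inv2).elim
  · exact swap_case ω⁻¹ ω (Or.inr rfl) (Or.inl rfl) h1 h2
  · exact swap_case ω⁻¹ ω⁻¹ (Or.inr rfl) (Or.inr rfl) h1 h2
  · exact (contra_prod _ _ h1 h2 hprod_inv2').elim
  · exact (contra_eq _ h1 h2).elim

section part2
variable (n : ℕ) (ζ : ℂ)

lemma odd_pow_eq_one {c : ℂ} (hodd : Odd n) (h2 : c * c = 1) (hn : c ^ n = 1) : c = 1 := by
  obtain ⟨k, hk⟩ := hodd
  have hsq : c ^ 2 = 1 := by rw [sq]; exact h2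
  calc c = (c ^ 2) ^ k * c := by rw [hsq, one_pow, one_mul]
    _ = c ^ n := by rw [← pow_mul, ← pow_succ, hk]
    _ = 1 := hn

lemma scalar_tensor (hodd : Odd n)
    (Gs : Set (Matrix (Fin 2) (Fin 2) ℂ))
    (hcls : ∀ g ∈ Gs, ∃ z : ℂ, z ^ n = 1 ∧ (g = Dm z ∨ g = Am z)) :
    ∀ l : ℂ, l ≠ 0 → (l • (1 : Matrix (Fin 2 × Fin 2) (Fin 2 × Fin 2) ℂ)) ∈ tensorSet Gs →
      l = 1 := by
  intro l hl0 hmem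
  have hn0 : n ≠ 0 := by rintro rfl; exact (Nat.not_odd_iff_even.mpr Even.zero) hodd
  obtain ⟨a, haG, b, hbG, hab⟩ := hmem
  obtain ⟨z, hzn, hza⟩ := hcls a haG
  obtain ⟨w, hwn, hwb⟩ := hcls b hbG
  have hz0 : z ≠ 0 := fun h => by rw [h, zero_pow hn0] at hzn; exact zero_ne_one hzn
  have hw0 : w ≠ 0 := fun h => by rw [h, zero_pow hn0] at hwn; exact zero_ne_one hwn
  have hE : ∀ p : Fin 2 × Fin 2, l = a p.1 p.1 * b p.2 p.2 := by
    intro p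
    have := congrArg (fun M => M p p) hab
    simpa [Matrix.smul_apply, Matrix.one_apply_eq] using this
  have hDa : a = Dm z := by
    rcases hza with h | rfl
    · exact h
    · exfalso
      have h0 := hE ((0 : Fin 2), (0 : Fin 2))
      rw [show (Am z) 0 0 = 0 by simp [Am], zero_mul] at h0
      exact hl0 h0
  have hDb : b = Dm w := by
    rcases hwb with h | rfl
    · exact h
    · exfalso
      have h0 := hE ((0 : Fin 2), (0 : Fin 2))
      rw [show (Am w) 0 0 = 0 by simp [Am], mul_zero] at h0
      exact hl0 h0
  subst hDa hDb
  have h00 := hE ((0 : Fin 2), (0 : Fin 2))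
  have h01 := hE ((0 : Fin 2), (1 : Fin 2))
  have h10 := hE ((1 : Fin 2), (0 : Fin 2))
  rw [show (Dm z) 0 0 = z by simp [Dm], show (Dm w) 0 0 = w by simp [Dm]] at h00
  rw [show (Dm z) 0 0 = z by simp [Dm], show (Dm w) 1 1 = w⁻¹ by simp [Dm]] at h01
  rw [show (Dm z) 1 1 = z⁻¹ by simp [Dm], show (Dm w) 0 0 = w by simp [Dm]] at h10
  have hww : w * w = 1 := by
    have h := h00.symm.trans h01
    have h' : z * (w * w) = z * 1 := by
      rw [mul_one]
      calc z * (w * w) = z * w * w := by ring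
        _ = z * w⁻¹ * w := by rw [h]
        _ = z := by rw [mul_assoc, inv_mul_cancel₀ hw0, mul_one]
    exact mul_left_cancel₀ hz0 h'
  have hzz : z * z = 1 := by
    have h := h00.symm.trans h10
    have h' : (z * z) * w = 1 * w := by
      rw [one_mul]
      calc (z * z) * w = z * (z * w) := by ring
        _ = z * (z⁻¹ * w) := by rw [h]
        _ = w := by rw [← mul_assoc, mul_inv_cancel₀ hz0, one_mul]
    exact mul_right_cancel₀ hw0 h'
  rw [h00, odd_pow_eq_one n hodd hzz hzn, odd_pow_eq_one n hodd hww hwn, one_mul]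

lemma projnorm_conj (hodd : Odd n) (hζn : ζ ^ n = 1)
    (Gs : Set (Matrix (Fin 2) (Fin 2) ℂ))
    (hGs : Gs = (Submonoid.closure {Dm ζ, Am 1} : Submonoid (Matrix (Fin 2) (Fin 2) ℂ)))
    (M : Matrix (Fin 2 × Fin 2) (Fin 2 × Fin 2) ℂ)
    (hMl : Mᴴ * M = 1) (hMr : M * Mᴴ = 1)
    (hP : ProjNorm M (tensorSet Gs)) :
    ∀ a b : Matrix (Fin 2) (Fin 2) ℂ, a ∈ Submonoid.closure {Dm ζ, Am 1} →
      b ∈ Submonoid.closure {Dm ζ, Am 1} →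
      ∃ t ∈ tensorSet Gs, M * (a ⊗ₖ b) * Mᴴ = t ∨ M * (a ⊗ₖ b) * Mᴴ = -t := by
  have hn0 : n ≠ 0 := by rintro rfl; exact (Nat.not_odd_iff_even.mpr Even.zero) hodd
  have hζ0 : ζ ≠ 0 := fun h => by rw [h, zero_pow hn0] at hζn; exact zero_ne_one hζn
  have hmemG : ∀ x, x ∈ Submonoid.closure {Dm ζ, Am 1} → x ∈ Gs := by
    intro x hx; rw [hGs]; exact hx
  have hDmem : Dm ζ ∈ Gs := hmemG _ (Submonoid.subset_closure (Or.inl rfl))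
  have hAmem : Am 1 ∈ Gs := hmemG _ (Submonoid.subset_closure (Or.inr rfl))
  have h1mem : (1 : Matrix (Fin 2) (Fin 2) ℂ) ∈ Gs := hmemG _ (one_mem _)
  have hTmul : ∀ x y : Matrix (Fin 2 × Fin 2) (Fin 2 × Fin 2) ℂ,
      x ∈ tensorSet Gs → y ∈ tensorSet Gs → x * y ∈ tensorSet Gs := by
    rintro x y ⟨a, ha, b, hb, rfl⟩ ⟨a', ha', b', hb', rfl⟩
    refine ⟨a * a', ?_, b * b', ?_, by rw [Matrix.mul_kronecker_mul]⟩
    · rw [hGs] at ha ha' ⊢; exact mul_mem ha ha'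
    · rw [hGs] at hb hb' ⊢; exact mul_mem hb hb'
  have hT1 : (1 : Matrix (Fin 2 × Fin 2) (Fin 2 × Fin 2) ℂ) ∈ tensorSet Gs :=
    ⟨1, h1mem, 1, h1mem, Matrix.one_kronecker_one.symm⟩
  have hTpow : ∀ x ∈ tensorSet Gs, ∀ k : ℕ, x ^ k ∈ tensorSet Gs := by
    intro x hx k
    induction k with
    | zero => rw [pow_zero]; exact hT1
    | succ k ih => rw [pow_succ]; exact hTmul _ _ ih hx
  have hcls : ∀ g ∈ Gs, ∃ z : ℂ, z ^ n = 1 ∧ (g = Dm z ∨ g = Am z) := by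
    intro g hg
    rw [hGs] at hg
    exact classify n ζ hζn hg
  have hscal := scalar_tensor n hodd Gs hcls
  have smul_one_mem : ∀ (c : ℂ), c ≠ 0 →
      ∀ W ∈ tensorSet Gs, c • W = 1 → c = 1 := by
    intro c hc W hW hcw
    have hW1 : W = c⁻¹ • (1 : Matrix (Fin 2 × Fin 2) (Fin 2 × Fin 2) ℂ) := by
      rw [← hcw, smul_smul, inv_mul_cancel₀ hc, one_smul]
    have := hscal c⁻¹ (inv_ne_zero hc) (hW1 ▸ hW)
    rwa [inv_eq_one] at this
  -- base cases, left factor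
  have habs_ne : ∀ c : ℂ, ‖c‖ = 1 → c ≠ 0 := by
    intro c hc h; rw [h] at hc; simp at hc
  -- B ⊗ 1
  obtain ⟨hB', hB'T, cb, hcb1, hcbeq⟩ := hP ((Am 1) ⊗ₖ 1) ⟨Am 1, hAmem, 1, h1mem, rfl⟩
  have hcb0 : cb ≠ 0 := habs_ne cb hcb1
  have hBB : ((Am 1 : Matrix (Fin 2) (Fin 2) ℂ) ⊗ₖ (1 : Matrix (Fin 2) (Fin 2) ℂ)) *
      ((Am 1) ⊗ₖ 1) = 1 := by
    simp only [← Matrix.mul_kronecker_mul, Am_mul_Am, inv_one, one_mul, mul_one, Dm_one,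
      Matrix.one_kronecker_one]
  have hcb2 : cb * cb = 1 := by
    have h := conj_mul hMl ((Am 1) ⊗ₖ 1) ((Am 1) ⊗ₖ 1)
    rw [hcbeq, hBB, conj_one hMr, smul_mul_smul_comm] at h
    exact smul_one_mem _ (mul_ne_zero hcb0 hcb0) _ (hTmul _ _ hB'T hB'T) h
  -- D ⊗ 1
  obtain ⟨hD', hD'T, cd, hcd1, hcdeq⟩ := hP ((Dm ζ) ⊗ₖ 1) ⟨Dm ζ, hDmem, 1, h1mem, rfl⟩
  have hcd0 : cd ≠ 0 := habs_ne cd hcd1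
  have hDn : ((Dm ζ : Matrix (Fin 2) (Fin 2) ℂ) ⊗ₖ (1 : Matrix (Fin 2) (Fin 2) ℂ)) ^ n = 1 := by
    rw [kron_pow_left, Dm_pow, hζn, Dm_one, Matrix.one_kronecker_one]
  have hcdn : cd ^ n = 1 := by
    have h := conj_pow hMl hMr ((Dm ζ) ⊗ₖ 1) n
    rw [hcdeq, hDn, conj_one hMr, smul_pow] at h
    exact smul_one_mem _ (pow_ne_zero n hcd0) _ (hTpow _ hD'T n) h
  have hBDBD : (((Am 1 : Matrix (Fin 2) (Fin 2) ℂ) ⊗ₖ (1 : Matrix (Fin 2) (Fin 2) ℂ)) *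
      ((Dm ζ) ⊗ₖ 1)) * (((Am 1) ⊗ₖ 1) * ((Dm ζ) ⊗ₖ 1)) = 1 := by
    simp only [← Matrix.mul_kronecker_mul, Am_mul_Dm, Am_mul_Am, one_mul, mul_one,
      inv_mul_cancel₀ hζ0, Dm_one, Matrix.one_kronecker_one]
  have hcd2 : cd * cd = 1 := by
    have h := conj_mul hMl (((Am 1) ⊗ₖ 1) * ((Dm ζ) ⊗ₖ 1)) (((Am 1) ⊗ₖ 1) * ((Dm ζ) ⊗ₖ 1))
    rw [← conj_mul hMl ((Am 1) ⊗ₖ 1) ((Dm ζ) ⊗ₖ 1)] at h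
    rw [hcbeq, hcdeq, hBDBD, conj_one hMr] at h
    rw [smul_mul_smul_comm, smul_mul_smul_comm] at h
    have hcoef : cb * cd * (cb * cd) = cd * cd := by
      rw [show cb * cd * (cb * cd) = (cb * cb) * (cd * cd) from by ring, hcb2, one_mul]
    rw [hcoef] at h
    exact smul_one_mem _ (mul_ne_zero hcd0 hcd0) _
      (hTmul _ _ (hTmul _ _ hB'T hD'T) (hTmul _ _ hB'T hD'T)) h
  have hcd_one : cd = 1 := odd_pow_eq_one n hodd hcd2 hcdn
  -- now closure induction for left tensor factors
  have hleft : ∀ a ∈ Submonoid.closure {Dm ζ, Am 1},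
      ∃ t ∈ tensorSet Gs, M * (a ⊗ₖ 1) * Mᴴ = t ∨ M * (a ⊗ₖ 1) * Mᴴ = -t := by
    intro a ha
    induction ha using Submonoid.closure_induction with
    | mem x hx =>
      rcases hx with rfl | rfl
      · exact ⟨hD', hD'T, Or.inl (by rw [hcdeq, hcd_one, one_smul])⟩
      · rcases mul_self_eq_one_iff.mp hcb2 with rfl | rfl
        · exact ⟨hB', hB'T, Or.inl (by rw [hcbeq, one_smul])⟩
        · exact ⟨hB', hB'T, Or.inr (by rw [hcbeq, neg_smul, one_smul])⟩
    | one => exact ⟨1, hT1, Or.inl (by rw [Matrix.one_kronecker_one, conj_one hMr])⟩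
    | mul x y hx hy ihx ihy =>
      obtain ⟨t₁, ht₁, h₁⟩ := ihx
      obtain ⟨t₂, ht₂, h₂⟩ := ihy
      have hxy : (x * y) ⊗ₖ (1 : Matrix (Fin 2) (Fin 2) ℂ) = (x ⊗ₖ 1) * (y ⊗ₖ 1) := by
        rw [← Matrix.mul_kronecker_mul, mul_one]
      have hc := conj_mul hMl (x ⊗ₖ (1 : Matrix (Fin 2) (Fin 2) ℂ)) (y ⊗ₖ 1)
      rcases h₁ with h₁ | h₁ <;> rcases h₂ with h₂ | h₂
      · exact ⟨t₁ * t₂, hTmul _ _ ht₁ ht₂, Or.inl (by rw [hxy, ← hc, h₁, h₂])⟩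
      · exact ⟨t₁ * t₂, hTmul _ _ ht₁ ht₂, Or.inr (by rw [hxy, ← hc, h₁, h₂, mul_neg])⟩
      · exact ⟨t₁ * t₂, hTmul _ _ ht₁ ht₂, Or.inr (by rw [hxy, ← hc, h₁, h₂, neg_mul])⟩
      · exact ⟨t₁ * t₂, hTmul _ _ ht₁ ht₂, Or.inl (by rw [hxy, ← hc, h₁, h₂, neg_mul_neg])⟩
  -- right factors
  obtain ⟨hB2', hB2'T, cb2, hcb21, hcb2eq⟩ := hP (1 ⊗ₖ (Am 1)) ⟨1, h1mem, Am 1, hAmem, rfl⟩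
  have hcb20 : cb2 ≠ 0 := habs_ne cb2 hcb21
  have hBB2 : ((1 : Matrix (Fin 2) (Fin 2) ℂ) ⊗ₖ (Am 1 : Matrix (Fin 2) (Fin 2) ℂ)) *
      (1 ⊗ₖ (Am 1)) = 1 := by
    simp only [← Matrix.mul_kronecker_mul, Am_mul_Am, inv_one, one_mul, mul_one, Dm_one,
      Matrix.one_kronecker_one]
  have hcb22 : cb2 * cb2 = 1 := by
    have h := conj_mul hMl (1 ⊗ₖ (Am 1)) (1 ⊗ₖ (Am 1))
    rw [hcb2eq, hBB2, conj_one hMr, smul_mul_smul_comm] at h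
    exact smul_one_mem _ (mul_ne_zero hcb20 hcb20) _ (hTmul _ _ hB2'T hB2'T) h
  obtain ⟨hD2', hD2'T, cd2, hcd21, hcd2eq⟩ := hP (1 ⊗ₖ (Dm ζ)) ⟨1, h1mem, Dm ζ, hDmem, rfl⟩
  have hcd20 : cd2 ≠ 0 := habs_ne cd2 hcd21
  have hDn2 : ((1 : Matrix (Fin 2) (Fin 2) ℂ) ⊗ₖ (Dm ζ : Matrix (Fin 2) (Fin 2) ℂ)) ^ n = 1 := by
    rw [kron_pow_right, Dm_pow, hζn, Dm_one, Matrix.one_kronecker_one]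
  have hcd2n : cd2 ^ n = 1 := by
    have h := conj_pow hMl hMr (1 ⊗ₖ (Dm ζ)) n
    rw [hcd2eq, hDn2, conj_one hMr, smul_pow] at h
    exact smul_one_mem _ (pow_ne_zero n hcd20) _ (hTpow _ hD2'T n) h
  have hBDBD2 : (((1 : Matrix (Fin 2) (Fin 2) ℂ) ⊗ₖ (Am 1 : Matrix (Fin 2) (Fin 2) ℂ)) *
      (1 ⊗ₖ (Dm ζ))) * ((1 ⊗ₖ (Am 1)) * (1 ⊗ₖ (Dm ζ))) = 1 := by
    simp only [← Matrix.mul_kronecker_mul, Am_mul_Dm, Am_mul_Am, one_mul, mul_one,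
      inv_mul_cancel₀ hζ0, Dm_one, Matrix.one_kronecker_one]
  have hcd22 : cd2 * cd2 = 1 := by
    have h := conj_mul hMl ((1 ⊗ₖ (Am 1)) * (1 ⊗ₖ (Dm ζ))) ((1 ⊗ₖ (Am 1)) * (1 ⊗ₖ (Dm ζ)))
    rw [← conj_mul hMl (1 ⊗ₖ (Am 1)) (1 ⊗ₖ (Dm ζ))] at h
    rw [hcb2eq, hcd2eq, hBDBD2, conj_one hMr] at h
    rw [smul_mul_smul_comm, smul_mul_smul_comm] at h
    have hcoef : cb2 * cd2 * (cb2 * cd2) = cd2 * cd2 := by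
      rw [show cb2 * cd2 * (cb2 * cd2) = (cb2 * cb2) * (cd2 * cd2) from by ring, hcb22, one_mul]
    rw [hcoef] at h
    exact smul_one_mem _ (mul_ne_zero hcd20 hcd20) _
      (hTmul _ _ (hTmul _ _ hB2'T hD2'T) (hTmul _ _ hB2'T hD2'T)) h
  have hcd2_one : cd2 = 1 := odd_pow_eq_one n hodd hcd22 hcd2n
  have hright : ∀ b ∈ Submonoid.closure {Dm ζ, Am 1},
      ∃ t ∈ tensorSet Gs, M * (1 ⊗ₖ b) * Mᴴ = t ∨ M * (1 ⊗ₖ b) * Mᴴ = -t := by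
    intro b hb
    induction hb using Submonoid.closure_induction with
    | mem x hx =>
      rcases hx with rfl | rfl
      · exact ⟨hD2', hD2'T, Or.inl (by rw [hcd2eq, hcd2_one, one_smul])⟩
      · rcases mul_self_eq_one_iff.mp hcb22 with rfl | rfl
        · exact ⟨hB2', hB2'T, Or.inl (by rw [hcb2eq, one_smul])⟩
        · exact ⟨hB2', hB2'T, Or.inr (by rw [hcb2eq, neg_smul, one_smul])⟩
    | one => exact ⟨1, hT1, Or.inl (by rw [Matrix.one_kronecker_one, conj_one hMr])⟩
    | mul x y hx hy ihx ihy =>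
      obtain ⟨t₁, ht₁, h₁⟩ := ihx
      obtain ⟨t₂, ht₂, h₂⟩ := ihy
      have hxy : (1 : Matrix (Fin 2) (Fin 2) ℂ) ⊗ₖ (x * y) = (1 ⊗ₖ x) * (1 ⊗ₖ y) := by
        rw [← Matrix.mul_kronecker_mul, mul_one]
      have hc := conj_mul hMl ((1 : Matrix (Fin 2) (Fin 2) ℂ) ⊗ₖ x) (1 ⊗ₖ y)
      rcases h₁ with h₁ | h₁ <;> rcases h₂ with h₂ | h₂
      · exact ⟨t₁ * t₂, hTmul _ _ ht₁ ht₂, Or.inl (by rw [hxy, ← hc, h₁, h₂])⟩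
      · exact ⟨t₁ * t₂, hTmul _ _ ht₁ ht₂, Or.inr (by rw [hxy, ← hc, h₁, h₂, mul_neg])⟩
      · exact ⟨t₁ * t₂, hTmul _ _ ht₁ ht₂, Or.inr (by rw [hxy, ← hc, h₁, h₂, neg_mul])⟩
      · exact ⟨t₁ * t₂, hTmul _ _ ht₁ ht₂, Or.inl (by rw [hxy, ← hc, h₁, h₂, neg_mul_neg])⟩
  -- combine
  intro a b ha hb
  obtain ⟨t₁, ht₁, h₁⟩ := hleft a ha
  obtain ⟨t₂, ht₂, h₂⟩ := hright b hb
  have hab : a ⊗ₖ b = (a ⊗ₖ (1 : Matrix (Fin 2) (Fin 2) ℂ)) *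
      ((1 : Matrix (Fin 2) (Fin 2) ℂ) ⊗ₖ b) := by
    rw [← Matrix.mul_kronecker_mul, mul_one, one_mul]
  have hc := conj_mul hMl (a ⊗ₖ (1 : Matrix (Fin 2) (Fin 2) ℂ))
    ((1 : Matrix (Fin 2) (Fin 2) ℂ) ⊗ₖ b)
  rcases h₁ with h₁ | h₁ <;> rcases h₂ with h₂ | h₂
  · exact ⟨t₁ * t₂, hTmul _ _ ht₁ ht₂, Or.inl (by rw [hab, ← hc, h₁, h₂])⟩
  · exact ⟨t₁ * t₂, hTmul _ _ ht₁ ht₂, Or.inr (by rw [hab, ← hc, h₁, h₂, mul_neg])⟩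
  · exact ⟨t₁ * t₂, hTmul _ _ ht₁ ht₂, Or.inr (by rw [hab, ← hc, h₁, h₂, neg_mul])⟩
  · exact ⟨t₁ * t₂, hTmul _ _ ht₁ ht₂, Or.inl (by rw [hab, ← hc, h₁, h₂, neg_mul_neg])⟩

end part2
lemma kron_neg_right (a b : Matrix (Fin 2) (Fin 2) ℂ) : a ⊗ₖ (-b) = -(a ⊗ₖ b) := by
  ext p q
  simp [Matrix.kroneckerMap_apply]

lemma Gp_subset (n : ℕ) (hodd : Odd n) (ω : ℂ) (hωn : ω ^ n = -1) :
    ∀ a ∈ Submonoid.closure {Dm ω, Am 1},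
      a ∈ Submonoid.closure {Dm (ω ^ 2), Am 1} ∨
        -a ∈ Submonoid.closure {Dm (ω ^ 2), Am 1} := by
  intro a ha
  induction ha using Submonoid.closure_induction with
  | mem x hx =>
    rcases hx with rfl | rfl
    · right
      obtain ⟨k, hk⟩ := hodd
      have hneg : -Dm ω = (Dm (ω ^ 2)) ^ (k + 1) := by
        rw [Dm_pow, ← pow_mul, ← Dm_neg]
        congr 1
        rw [show 2 * (k + 1) = n + 1 by omega, pow_succ, hωn, neg_one_mul]
      rw [hneg]
      have hmem : Dm (ω ^ 2) ∈
          Submonoid.closure ({Dm (ω ^ 2), Am 1} : Set (Matrix (Fin 2) (Fin 2) ℂ)) :=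
        Submonoid.subset_closure (by left; rfl)
      exact pow_mem hmem (k + 1)
    · exact Or.inl (Submonoid.subset_closure (Or.inr rfl))
  | one => exact Or.inl (one_mem _)
  | mul x y hx hy ihx ihy =>
    rcases ihx with ihx | ihx <;> rcases ihy with ihy | ihy
    · exact Or.inl (mul_mem ihx ihy)
    · exact Or.inr (by rw [← mul_neg]; exact mul_mem ihx ihy)
    · exact Or.inr (by rw [← neg_mul]; exact mul_mem ihx ihy)
    · exact Or.inl (by rw [← neg_mul_neg x y]; exact mul_mem ihx ihy)

lemma tensor_finite (m : ℕ) (hm : 0 < m) (ζ : ℂ) (hζ : ζ ^ m = 1)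
    (Gs : Set (Matrix (Fin 2) (Fin 2) ℂ))
    (hGs : Gs = (Submonoid.closure {Dm ζ, Am 1} : Submonoid (Matrix (Fin 2) (Fin 2) ℂ))) :
    (tensorSet Gs).Finite := by
  have hZ : {z : ℂ | z ^ m = 1}.Finite := by
    apply Set.Finite.subset (Polynomial.nthRootsFinset m (1 : ℂ)).finite_toSet
    intro z hz
    rw [Finset.mem_coe, Polynomial.mem_nthRootsFinset hm]
    exact hz
  have hGfin : Gs.Finite := by
    apply Set.Finite.subset ((hZ.image Dm).union (hZ.image Am))
    intro g hg
    obtain ⟨z, hz, hc⟩ := classify m ζ hζ (by rw [hGs] at hg; exact hg)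
    rcases hc with rfl | rfl
    · exact Or.inl ⟨z, hz, rfl⟩
    · exact Or.inr ⟨z, hz, rfl⟩
  apply Set.Finite.subset (Set.Finite.image (fun p => p.1 ⊗ₖ p.2) (hGfin.prod hGfin))
  rintro x ⟨a, ha, b, hb, rfl⟩
  exact ⟨(a, b), ⟨ha, hb⟩, rfl⟩

end Stmt15

/-- Let n ≥ 3 be odd, ω_{2n} = e^{2πi/(2n)}, and G' ⊆ U(2) the matrix
group generated by C = diag(ω_{2n}, ω_{2n}⁻¹) and B = [[0,1],[1,0]].  Then G' is not
entangling: every N ∈ U(4) with N (G'⊗G') N† = G'⊗G' satisfies N = A⊗B' or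
N = SWAP·(A⊗B') for some A, B' ∈ U(2).  Consequently, for odd n the matrix group
generated by diag(ω_n, ω_n⁻¹) and B has no entangling projective normaliser of its
tensor square. -/
theorem stmt_15 (n : ℕ) (hn : 3 ≤ n) (hodd : Odd n)
    (ω : ℂ) (hω : ω = Complex.exp (2 * Real.pi * Complex.I / (2 * n)))
    (ωn : ℂ) (hωn : ωn = Complex.exp (2 * Real.pi * Complex.I / n))
    (C B : Matrix (Fin 2) (Fin 2) ℂ)
    (hC : C = !![ω, 0; 0, ω⁻¹]) (hB : B = !![0, 1; 1, 0])
    (G' : Set (Matrix (Fin 2) (Fin 2) ℂ))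
    (hG' : G' = (Submonoid.closure {C, B} : Submonoid (Matrix (Fin 2) (Fin 2) ℂ)))
    (G : Set (Matrix (Fin 2) (Fin 2) ℂ))
    (hG : G = (Submonoid.closure {!![ωn, 0; 0, ωn⁻¹], B} :
      Submonoid (Matrix (Fin 2) (Fin 2) ℂ))) :
    (∀ N : Matrix (Fin 2 × Fin 2) (Fin 2 × Fin 2) ℂ,
      N ∈ Matrix.unitaryGroup (Fin 2 × Fin 2) ℂ →
      (fun g => N * g * Nᴴ) '' tensorSet G' = tensorSet G' →
      ∃ A B' : Matrix (Fin 2) (Fin 2) ℂ,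
        A ∈ Matrix.unitaryGroup (Fin 2) ℂ ∧ B' ∈ Matrix.unitaryGroup (Fin 2) ℂ ∧
        (N = A ⊗ₖ B' ∨ N = swapMat * (A ⊗ₖ B'))) ∧
    ¬ ∃ M : Matrix (Fin 2 × Fin 2) (Fin 2 × Fin 2) ℂ,
        M ∈ Matrix.unitaryGroup (Fin 2 × Fin 2) ℂ ∧
        ProjNorm M (tensorSet G) ∧ Entangling M := by
  classical
  obtain ⟨hp2n, hpn, hsq1, hsqn1, hsqeq⟩ := Stmt15.omega_facts n hn ω hω
  have h2n0 : 2 * n ≠ 0 := by omega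
  have hω0 : ω ≠ 0 := fun h => by
    rw [h, zero_pow h2n0] at hp2n; exact zero_ne_one hp2n
  have hC' : C = Stmt15.Dm ω := by rw [hC]; rfl
  have hB' : B = Stmt15.Am 1 := by rw [hB]; simp [Stmt15.Am]
  have hωn2 : ωn = ω ^ 2 := by rw [hωn, ← hsqeq]
  have hGs' : G' = (Submonoid.closure {Stmt15.Dm ω, Stmt15.Am 1} :
      Submonoid (Matrix (Fin 2) (Fin 2) ℂ)) := by rw [hG', hC', hB']
  have hGsG : G = (Submonoid.closure {Stmt15.Dm (ω ^ 2), Stmt15.Am 1} :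
      Submonoid (Matrix (Fin 2) (Fin 2) ℂ)) := by
    rw [hG, hB', show !![ωn, 0; 0, ωn⁻¹] = Stmt15.Dm (ω ^ 2) from by rw [hωn2]; rfl]
  have hcls' : ∀ g ∈ G', ∃ z : ℂ, z ≠ 0 ∧ (g = Stmt15.Dm z ∨ g = Stmt15.Am z) := by
    intro g hg
    obtain ⟨z, hz, hc⟩ := Stmt15.classify (2 * n) ω hp2n (by rw [hGs'] at hg; exact hg)
    exact ⟨z, fun h => by rw [h, zero_pow h2n0] at hz; exact zero_ne_one hz, hc⟩
  have hCG : Stmt15.Dm ω ∈ G' := by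
    rw [hGs']; exact Submonoid.subset_closure (by left; rfl)
  have hBG : Stmt15.Am 1 ∈ G' := by
    rw [hGs']; exact Submonoid.subset_closure (by right; rfl)
  have h1G : (1 : Matrix (Fin 2) (Fin 2) ℂ) ∈ G' := by rw [hGs']; exact one_mem _
  have partA : ∀ N : Matrix (Fin 2 × Fin 2) (Fin 2 × Fin 2) ℂ,
      N ∈ Matrix.unitaryGroup (Fin 2 × Fin 2) ℂ →
      (fun g => N * g * Nᴴ) '' tensorSet G' = tensorSet G' →
      ∃ A B' : Matrix (Fin 2) (Fin 2) ℂ,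
        A ∈ Matrix.unitaryGroup (Fin 2) ℂ ∧ B' ∈ Matrix.unitaryGroup (Fin 2) ℂ ∧
        (N = A ⊗ₖ B' ∨ N = swapMat * (A ⊗ₖ B')) := by
    intro N hN himg
    have hNr : N * Nᴴ = 1 := by
      have := Matrix.mem_unitaryGroup_iff.mp hN
      rwa [Matrix.star_eq_conjTranspose] at this
    have hNl : Nᴴ * N = 1 := by
      have := Matrix.mem_unitaryGroup_iff'.mp hN
      rwa [Matrix.star_eq_conjTranspose] at this
    exact Stmt15.part1 ω hω0 hsq1 hsqn1 G' hcls' hCG hBG h1G N hNl hNr himg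
  refine ⟨partA, ?_⟩
  rintro ⟨M, hMU, hP, hEnt⟩
  have hMr : M * Mᴴ = 1 := by
    have := Matrix.mem_unitaryGroup_iff.mp hMU
    rwa [Matrix.star_eq_conjTranspose] at this
  have hMl : Mᴴ * M = 1 := by
    have := Matrix.mem_unitaryGroup_iff'.mp hMU
    rwa [Matrix.star_eq_conjTranspose] at this
  have hζn : (ω ^ 2) ^ n = 1 := by rw [← pow_mul]; exact hp2n
  have hP' : ProjNorm M (tensorSet ((Submonoid.closure {Stmt15.Dm (ω ^ 2), Stmt15.Am 1} :
      Submonoid (Matrix (Fin 2) (Fin 2) ℂ)) : Set (Matrix (Fin 2) (Fin 2) ℂ))) := by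
    rw [← hGsG]; exact hP
  have hconjT := Stmt15.projnorm_conj n (ω ^ 2) hodd hζn _ rfl M hMl hMr hP'
  have hGsub := Stmt15.Gp_subset n hodd ω hpn
  have hGle : (Submonoid.closure {Stmt15.Dm (ω ^ 2), Stmt15.Am 1} :
      Submonoid (Matrix (Fin 2) (Fin 2) ℂ)) ≤
      Submonoid.closure {Stmt15.Dm ω, Stmt15.Am 1} := by
    rw [Submonoid.closure_le]
    rintro x (rfl | rfl)
    · have hx : Stmt15.Dm (ω ^ 2) = Stmt15.Dm ω * Stmt15.Dm ω := by
        rw [Stmt15.Dm_mul_Dm, sq]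
      rw [hx]
      exact mul_mem (Submonoid.subset_closure (by left; rfl))
        (Submonoid.subset_closure (by left; rfl))
    · exact Submonoid.subset_closure (by right; rfl)
  have hnegmem : ∀ a : Matrix (Fin 2) (Fin 2) ℂ,
      a ∈ Submonoid.closure {Stmt15.Dm ω, Stmt15.Am 1} →
      -a ∈ Submonoid.closure {Stmt15.Dm ω, Stmt15.Am 1} := by
    intro a ha
    have hm1 : (-1 : Matrix (Fin 2) (Fin 2) ℂ) ∈
        Submonoid.closure {Stmt15.Dm ω, Stmt15.Am 1} := by
      have h1 : ((Stmt15.Dm ω) ^ n : Matrix (Fin 2) (Fin 2) ℂ) = -1 := by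
        rw [Stmt15.Dm_pow, hpn, show (-1 : ℂ) = -(1 : ℂ) from rfl, Stmt15.Dm_neg,
          Stmt15.Dm_one]
      rw [← h1]
      exact pow_mem (Submonoid.subset_closure (by left; rfl)) n
    have := mul_mem hm1 ha
    rwa [neg_one_mul] at this
  have hT'sub : tensorSet ((Submonoid.closure {Stmt15.Dm (ω ^ 2), Stmt15.Am 1} :
      Submonoid (Matrix (Fin 2) (Fin 2) ℂ)) : Set (Matrix (Fin 2) (Fin 2) ℂ)) ⊆
      tensorSet G' := by
    rintro x ⟨a, ha, b, hb, rfl⟩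
    exact ⟨a, by rw [hGs']; exact hGle ha, b, by rw [hGs']; exact hGle hb, rfl⟩
  have hT'neg : ∀ t ∈ tensorSet G', -t ∈ tensorSet G' := by
    rintro t ⟨a, ha, b, hb, rfl⟩
    refine ⟨-a, ?_, b, hb, (Stmt15.kron_neg_left a b).symm⟩
    rw [hGs'] at ha ⊢
    exact hnegmem a ha
  have habs2 : ∀ (x' : Matrix (Fin 2 × Fin 2) (Fin 2 × Fin 2) ℂ)
      (t : Matrix (Fin 2 × Fin 2) (Fin 2 × Fin 2) ℂ), t ∈ tensorSet G' →
      (M * x' * Mᴴ = t ∨ M * x' * Mᴴ = -t) → M * x' * Mᴴ ∈ tensorSet G' := by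
    intro x' t ht h
    rcases h with h | h
    · rw [h]; exact ht
    · rw [h]; exact hT'neg t ht
  have himgsub : (fun g => M * g * Mᴴ) '' tensorSet G' ⊆ tensorSet G' := by
    rintro x ⟨y, ⟨a, ha, b, hb, rfl⟩, rfl⟩
    show M * (a ⊗ₖ b) * Mᴴ ∈ tensorSet G'
    have haC : a ∈ Submonoid.closure {Stmt15.Dm ω, Stmt15.Am 1} := by
      rw [hGs'] at ha; exact ha
    have hbC : b ∈ Submonoid.closure {Stmt15.Dm ω, Stmt15.Am 1} := by
      rw [hGs'] at hb; exact hb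
    rcases hGsub a haC with haG | haG <;> rcases hGsub b hbC with hbG | hbG
    · obtain ⟨t, ht, heq⟩ := hconjT a b haG hbG
      exact habs2 _ t (hT'sub ht) heq
    · obtain ⟨t, ht, heq⟩ := hconjT a (-b) haG hbG
      have hrw : M * (a ⊗ₖ (-b)) * Mᴴ = -(M * (a ⊗ₖ b) * Mᴴ) := by
        rw [Stmt15.kron_neg_right]
        exact Stmt15.conj_neg _
      rw [hrw] at heq
      rcases heq with h | h
      · exact habs2 _ t (hT'sub ht) (Or.inr (neg_eq_iff_eq_neg.mp h))
      · exact habs2 _ t (hT'sub ht) (Or.inl (neg_inj.mp h))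
    · obtain ⟨t, ht, heq⟩ := hconjT (-a) b haG hbG
      have hrw : M * ((-a) ⊗ₖ b) * Mᴴ = -(M * (a ⊗ₖ b) * Mᴴ) := by
        rw [Stmt15.kron_neg_left]
        exact Stmt15.conj_neg _
      rw [hrw] at heq
      rcases heq with h | h
      · exact habs2 _ t (hT'sub ht) (Or.inr (neg_eq_iff_eq_neg.mp h))
      · exact habs2 _ t (hT'sub ht) (Or.inl (neg_inj.mp h))
    · obtain ⟨t, ht, heq⟩ := hconjT (-a) (-b) haG hbG
      have hrw : M * ((-a) ⊗ₖ (-b)) * Mᴴ = M * (a ⊗ₖ b) * Mᴴ := by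
        rw [Stmt15.kron_neg_left, Stmt15.kron_neg_right, neg_neg]
      rw [hrw] at heq
      exact habs2 _ t (hT'sub ht) heq
  have hfin := Stmt15.tensor_finite (2 * n) (by omega) ω hp2n G' hGs'
  have hinj : Set.InjOn (fun g => M * g * Mᴴ) (tensorSet G') := fun x _ y _ h =>
    Stmt15.conj_inj hMl h
  have heqimg : (fun g => M * g * Mᴴ) '' tensorSet G' = tensorSet G' :=
    Set.eq_of_subset_of_ncard_le himgsub
      (le_of_eq (Set.ncard_image_of_injOn hinj).symm) hfin
  obtain ⟨A, B', hAU, hBU, hor⟩ :=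
    Stmt15.part1 ω hω0 hsq1 hsqn1 G' hcls' hCG hBG h1G M hMl hMr heqimg
  obtain ⟨hne1, hne2⟩ := hEnt A B' hAU hBU
  rcases hor with h | h
  · exact hne1 h
  · exact hne2 h
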